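/- Every connected finite graph G on at least 3 vertices has a Hamiltonian cycle in its cube G³, where G³ has the same vertex set as G and an edge between two distinct vertices whenever their distance in G is at most 3. -/

import Mathlib

open SimpleGraph

universe u

/-- The cube of a graph `G`: same vertex set, with an edge between two distinct
vertices whenever their distance in `G` is at most `3`. -/
def SimpleGraph.cube {V : Type*} (G : SimpleGraph V) : SimpleGraph V :=
  SimpleGraph.fromRel (fun u v => G.Reachable u v ∧ G.dist u v ≤ 3)

lemma cube_adj {V : Type*} {G : SimpleGraph V} {u v : V} :
    G.cube.Adj u v ↔ u ≠ v ∧ G.Reachable u v ∧ G.dist u v ≤ 3 := by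
  rw [SimpleGraph.cube, fromRel_adj]
  constructor
  · rintro ⟨h, (h' | h')⟩
    · exact ⟨h, h'⟩
    · exact ⟨h, h'.1.symm, by
        obtain ⟨w, hw⟩ := h'.1.exists_walk_length_eq_dist
        calc G.dist u v ≤ w.reverse.length := G.dist_le _
        _ = w.length := by simp
        _ ≤ 3 := hw ▸ h'.2⟩
  · rintro ⟨h, h'⟩; exact ⟨h, Or.inl h'⟩

/-- The cube homomorphism induced by an injective graph homomorphism. -/
def cubeHom {α V : Type*} {A : SimpleGraph α} {B : SimpleGraph V} (f : A →g B)
    (hf : Function.Injective f) : A.cube →g B.cube where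
  toFun := f
  map_rel' := by
    intro x y h
    rw [cube_adj] at h ⊢
    refine ⟨fun e => h.1 (hf e), h.2.1.map f, ?_⟩
    obtain ⟨w, hw⟩ := h.2.1.exists_walk_length_eq_dist
    calc B.dist (f x) (f y) ≤ (w.map f).length := B.dist_le _
    _ = w.length := w.length_map f
    _ ≤ 3 := hw ▸ h.2.2

lemma reach_induce {V : Type*} {G : SimpleGraph V} {s : Set V} {u v : V}
    (p : G.Walk u v) (hp : ∀ w ∈ p.support, w ∈ s) (hu : u ∈ s) (hv : v ∈ s) :
    (G.induce s).Reachable ⟨u, hu⟩ ⟨v, hv⟩ := by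
  induction p with
  | nil => rfl
  | cons h q ih =>
    rename_i a b c
    have hb : b ∈ s := hp b (by simp)
    have : (G.induce s).Adj ⟨a, hu⟩ ⟨b, hb⟩ := by simpa using h
    exact this.reachable.trans (ih (fun w hw => hp w (by simp [hw])) hb hv)

lemma cover_aux {V : Type*} {G : SimpleGraph V} {a b u v : V}
    (p : G.Walk u v) :
    (G \ fromEdgeSet {s(a,b)}).Reachable u v ∨
    ((G \ fromEdgeSet {s(a,b)}).Reachable u a ∧ (G \ fromEdgeSet {s(a,b)}).Reachable b v) ∨
    ((G \ fromEdgeSet {s(a,b)}).Reachable u b ∧ (G \ fromEdgeSet {s(a,b)}).Reachable a v) := by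
  set G' := G \ fromEdgeSet {s(a,b)} with hG'
  induction p with
  | nil => exact Or.inl (Reachable.refl _)
  | cons h q ih =>
    rename_i x y z
    by_cases he : s(x, y) = s(a, b)
    · rw [Sym2.eq_iff] at he
      rcases he with ⟨rfl, rfl⟩ | ⟨rfl, rfl⟩
      · rcases ih with h1 | ⟨h1, h2⟩ | ⟨h1, h2⟩
        · exact Or.inr (Or.inl ⟨Reachable.refl _, h1⟩)
        · exact Or.inl (h1.symm.trans h2)
        · exact Or.inl h2
      · rcases ih with h1 | ⟨h1, h2⟩ | ⟨h1, h2⟩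
        · exact Or.inr (Or.inr ⟨Reachable.refl _, h1⟩)
        · exact Or.inl h2
        · exact Or.inr (Or.inl ⟨h1.symm, h1.symm.trans h2⟩)
    · have hadj : G'.Adj x y := by
        rw [hG', sdiff_adj, fromEdgeSet_adj]
        exact ⟨h, fun hc => he (by simpa using hc.1)⟩
      rcases ih with h1 | ⟨h1, h2⟩ | ⟨h1, h2⟩
      · exact Or.inl (hadj.reachable.trans h1)
      · exact Or.inr (Or.inl ⟨hadj.reachable.trans h1, h2⟩)
      · exact Or.inr (Or.inr ⟨hadj.reachable.trans h1, h2⟩)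

lemma cover {V : Type*} {G : SimpleGraph V} (hc : G.Connected) {a b : V}
    (hnr : ¬ (G \ fromEdgeSet {s(a,b)}).Reachable a b) (v : V) :
    (G \ fromEdgeSet {s(a,b)}).Reachable a v ∨ (G \ fromEdgeSet {s(a,b)}).Reachable b v := by
  obtain ⟨p⟩ := hc.preconnected a v
  rcases cover_aux (a := a) (b := b) p with h1 | ⟨h1, h2⟩ | ⟨h1, h2⟩
  · exact Or.inl h1
  · exact Or.inr h2
  · exact absurd h1 hnr

/-- One side of the tree split: a hamiltonian-type path covering the component of `a`
in `T` minus the edge `ab`, from `a` to a vertex at distance ≤ 1 from `a`. -/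
lemma side {V : Type u} [Fintype V] [DecidableEq V] {n : ℕ}
    (IH : ∀ (W : Type u) [Fintype W] [DecidableEq W] (T : SimpleGraph W),
      Fintype.card W ≤ n → T.Connected → T.IsAcyclic →
      ∀ a b : W, T.Adj a b → ∃ p : T.cube.Walk a b, p.IsHamiltonian)
    (T : SimpleGraph V) (hT : T.Connected) (hac : T.IsAcyclic)
    (hcard : Fintype.card V ≤ n + 1)
    (a b : V) (hab : T.Adj a b) :
    ∃ (y : V) (p : T.cube.Walk a y), p.IsPath ∧
      (∀ v, v ∈ p.support ↔ (T \ fromEdgeSet {s(a,b)}).Reachable a v) ∧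
      (y = a ∨ T.Adj a y) := by
  classical
  set G' := T \ fromEdgeSet {s(a,b)} with hG'def
  have hG'T : G' ≤ T := sdiff_le
  have hbr : ¬ G'.Reachable a b := isBridge_iff.mp (isAcyclic_iff_forall_adj_isBridge.mp hac hab)
  set S : Set V := {v | G'.Reachable a v} with hSdef
  have haS : a ∈ S := Reachable.refl a
  have hbS : b ∉ S := hbr
  by_cases hsing : ∀ v ∈ S, v = a
  · refine ⟨a, Walk.nil, Walk.IsPath.nil, fun v => ?_, Or.inl rfl⟩
    constructor
    · intro hv
      simp only [Walk.support_nil, List.mem_singleton] at hv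
      rw [hv]
    · intro hv
      simp [hsing v hv]
  · push_neg at hsing
    obtain ⟨v₀, hv₀S, hv₀a⟩ := hsing
    set Ta := G'.induce S with hTadef
    -- Ta is connected
    have hmemS : ∀ {u : V}, u ∈ S → G'.Reachable a u := fun h => h
    have hsupS : ∀ {u w : V} (p : G'.Walk u w), u ∈ S → ∀ x ∈ p.support, x ∈ S := by
      intro u w p hu x hx
      exact (hmemS hu).trans ⟨p.takeUntil x hx⟩
    have hTaconn : Ta.Connected := by
      rw [connected_iff]
      refine ⟨?_, ⟨⟨a, haS⟩⟩⟩
      rintro ⟨u, hu⟩ ⟨v, hv⟩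
      obtain ⟨p⟩ := (hmemS hu).symm.trans (hmemS hv)
      exact reach_induce p (hsupS p hu) hu hv
    -- homomorphism Ta →g T
    have finj : Function.Injective ((Hom.ofLE hG'T).comp (Embedding.induce (G := G') S).toHom) := by
      intro x y hxy
      exact Subtype.val_injective hxy
    set f := (Hom.ofLE hG'T).comp (Embedding.induce (G := G') S).toHom with hfdef
    -- Ta is acyclic
    have hTaac : Ta.IsAcyclic := by
      intro x c hc
      exact hac (c.map f) (hc.map finj)
    -- card
    have hcS : Fintype.card S ≤ n := by
      have h1 := Fintype.card_subtype_lt (p := (· ∈ S)) (x := b) hbS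
      have h2 : Fintype.card ↑S = Fintype.card {x // (· ∈ S) x} := Fintype.card_congr (Equiv.refl _)
      have h3 : Fintype.card ↑S < Fintype.card V := lt_of_eq_of_lt (Fintype.card_congr (Equiv.refl _)) h1
      omega
    -- a neighbor of a in Ta
    obtain ⟨q⟩ := hTaconn.preconnected ⟨a, haS⟩ ⟨v₀, hv₀S⟩
    obtain ⟨w, hw⟩ : ∃ w : S, Ta.Adj ⟨a, haS⟩ w := by
      cases q with
      | nil => exact absurd rfl hv₀a
      | cons h _ => exact ⟨_, h⟩
    obtain ⟨p₀, hp₀⟩ := IH S Ta hcS hTaconn hTaac ⟨a, haS⟩ w hw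
    refine ⟨(w : V), (p₀.map (cubeHom f finj)), ?_, ?_, ?_⟩
    · exact Walk.map_isPath_of_injective finj hp₀.isPath
    · intro v
      show v ∈ (Walk.map (cubeHom f finj) p₀).support ↔ G'.Reachable a v
      rw [Walk.support_map]
      constructor
      · rintro hv
        obtain ⟨x, _, rfl⟩ := List.mem_map.mp hv
        exact x.2
      · intro hv
        exact List.mem_map.mpr ⟨⟨v, hv⟩, hp₀.mem_support _, rfl⟩
    · refine Or.inr ?_
      have : G'.Adj a (w : V) := by simpa [hTadef] using hw
      exact hG'T this

lemma treeLemma : ∀ (n : ℕ) (V : Type u) [Fintype V] [DecidableEq V] (T : SimpleGraph V),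
    Fintype.card V ≤ n → T.Connected → T.IsAcyclic →
    ∀ a b : V, T.Adj a b → ∃ p : T.cube.Walk a b, p.IsHamiltonian := by
  intro n
  induction n with
  | zero =>
    intro V _ _ T hcard hT hac a b hab
    have : 0 < Fintype.card V := Fintype.card_pos_iff.mpr ⟨a⟩
    omega
  | succ n IH =>
    intro V _ _ T hcard hT hac a b hab
    obtain ⟨y₁, p₁, hp₁, hs₁, hy₁⟩ := side IH T hT hac hcard a b hab
    obtain ⟨y₂, p₂, hp₂, hs₂, hy₂⟩ := side IH T hT hac hcard b a hab.symm
    rw [show s(b,a) = s(a,b) from Sym2.eq_swap] at hs₂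
    set G' := T \ fromEdgeSet {s(a,b)} with hG'def
    have hbr : ¬ G'.Reachable a b :=
      isBridge_iff.mp (isAcyclic_iff_forall_adj_isBridge.mp hac hab)
    have hdisj : ∀ v, G'.Reachable a v → G'.Reachable b v → False :=
      fun v h1 h2 => hbr (h1.trans h2.symm)
    have hy₁r : G'.Reachable a y₁ := (hs₁ y₁).mp p₁.end_mem_support
    have hy₂r : G'.Reachable b y₂ := (hs₂ y₂).mp p₂.end_mem_support
    have hne : y₁ ≠ y₂ := fun h => hdisj y₁ hy₁r (h ▸ hy₂r)
    have hdist : T.dist y₁ y₂ ≤ 3 := by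
      rcases hy₁ with rfl | h1 <;> rcases hy₂ with rfl | h2
      · calc T.dist y₁ y₂ ≤ (Walk.cons hab Walk.nil).length := T.dist_le _
        _ ≤ 3 := by simp
      · calc T.dist y₁ y₂ ≤ (Walk.cons hab (Walk.cons h2 Walk.nil)).length := T.dist_le _
        _ ≤ 3 := by simp
      · calc T.dist y₁ y₂ ≤ (Walk.cons h1.symm (Walk.cons hab Walk.nil)).length := T.dist_le _
        _ ≤ 3 := by simp
      · calc T.dist y₁ y₂ ≤
            (Walk.cons h1.symm (Walk.cons hab (Walk.cons h2 Walk.nil))).length := T.dist_le _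
        _ ≤ 3 := by simp
    have hcube : T.cube.Adj y₁ y₂ := cube_adj.mpr ⟨hne, hT.preconnected y₁ y₂, hdist⟩
    refine ⟨p₁.append (Walk.cons hcube p₂.reverse), ?_⟩
    have hsupp : (p₁.append (Walk.cons hcube p₂.reverse)).support
        = p₁.support ++ p₂.reverse.support := by
      rw [Walk.support_append, Walk.support_cons, List.tail_cons]
    have hmem : ∀ v, v ∈ (p₁.append (Walk.cons hcube p₂.reverse)).support := by
      intro v
      rw [hsupp, List.mem_append]
      rcases cover hT hbr v with h | h
      · exact Or.inl ((hs₁ v).mpr h)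
      · refine Or.inr ?_
        rw [Walk.support_reverse, List.mem_reverse]
        exact (hs₂ v).mpr h
    refine Walk.IsPath.isHamiltonian_of_mem (Walk.IsPath.mk' ?_) hmem
    rw [hsupp]
    refine List.Nodup.append hp₁.support_nodup hp₂.reverse.support_nodup ?_
    intro v hv1 hv2
    rw [Walk.support_reverse, List.mem_reverse] at hv2
    exact hdisj v ((hs₁ v).mp hv1) ((hs₂ v).mp hv2)

lemma del_reach {V : Type*} {G : SimpleGraph V} {x y : V}
    (hr : (G \ fromEdgeSet {s(x,y)}).Reachable x y) {u v : V} (p : G.Walk u v) :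
    (G \ fromEdgeSet {s(x,y)}).Reachable u v := by
  induction p with
  | nil => rfl
  | cons h q ih =>
    rename_i c d e
    by_cases he : s(c, d) = s(x, y)
    · rw [Sym2.eq_iff] at he
      rcases he with ⟨rfl, rfl⟩ | ⟨rfl, rfl⟩
      · exact hr.trans ih
      · exact hr.symm.trans ih
    · have : (G \ fromEdgeSet {s(x,y)}).Adj c d := by
        rw [sdiff_adj, fromEdgeSet_adj]
        exact ⟨h, fun hc => he (by simpa using hc.1)⟩
      exact this.reachable.trans ih

lemma connLemma : ∀ (m : ℕ) (V : Type u) [Fintype V] [DecidableEq V] (G : SimpleGraph V),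
    G.edgeSet.ncard ≤ m → G.Connected →
    ∀ a b : V, G.Adj a b → ∃ p : G.cube.Walk a b, p.IsHamiltonian := by
  intro m
  induction m with
  | zero =>
    intro V _ _ G hm hG a b hab
    have h1 : 0 < G.edgeSet.ncard :=
      Set.ncard_pos (Set.toFinite _) |>.mpr ⟨s(a,b), hab⟩
    omega
  | succ m IH =>
    intro V _ _ G hm hG a b hab
    by_cases hac : G.IsAcyclic
    · exact treeLemma (Fintype.card V) V G le_rfl hG hac a b hab
    · -- there is a cycle
      rw [isAcyclic_iff_forall_adj_isBridge] at hac
      push_neg at hac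
      obtain ⟨x, y, hxy, hnb⟩ := hac
      rw [isBridge_iff_adj_and_forall_cycle_notMem hxy] at hnb
      push_neg at hnb
      obtain ⟨u, c, hc, hmemc⟩ := hnb
      -- pick an edge of the cycle different from s(a,b)
      obtain ⟨e', he'c, he'ne⟩ : ∃ e' ∈ c.edges, e' ≠ s(a, b) := by
        by_contra hall
        push_neg at hall
        have hlen : 2 ≤ c.edges.length := by
          rw [Walk.length_edges]
          have := hc.three_le_length
          omega
        have h0 : c.edges[0] = s(a,b) := hall _ (c.edges.getElem_mem (by omega))
        have h1 : c.edges[1] = s(a,b) := hall _ (c.edges.getElem_mem (by omega))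
        have := (List.Nodup.getElem_inj_iff hc.edges_nodup).mp (h0.trans h1.symm)
        omega
      -- the rest of the cycle shows the endpoints of e' remain reachable
      induction e' using Sym2.ind with
      | _ x' y' =>
      have hxy' : G.Adj x' y' ∧ (G \ fromEdgeSet {s(x', y')}).Reachable x' y' :=
        adj_and_reachable_delete_edges_iff_exists_cycle.mpr ⟨u, c, hc, he'c⟩
      set G2 := G \ fromEdgeSet {s(x', y')} with hG2def
      have hG2le : G2 ≤ G := sdiff_le
      have hG2conn : G2.Connected := by
        rw [connected_iff]
        refine ⟨fun p q => ?_, hG.nonempty⟩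
        obtain ⟨w⟩ := hG.preconnected p q
        exact del_reach hxy'.2 w
      have hG2adj : G2.Adj a b := by
        rw [hG2def, sdiff_adj, fromEdgeSet_adj]
        exact ⟨hab, fun hc => he'ne (by simpa using hc.1.symm)⟩
      have hcard : G2.edgeSet.ncard ≤ m := by
        have hss : G2.edgeSet ⊂ G.edgeSet := by
          refine ⟨edgeSet_mono hG2le, fun hsub => ?_⟩
          have h1 : s(x', y') ∈ G2.edgeSet := hsub (hxy'.1 : G.Adj x' y')
          rw [mem_edgeSet, hG2def, sdiff_adj, fromEdgeSet_adj] at h1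
          exact h1.2 ⟨rfl, hxy'.1.ne⟩
        have := Set.ncard_lt_ncard hss (Set.toFinite _)
        omega
      obtain ⟨p, hp⟩ := IH V G2 hcard hG2conn a b hG2adj
      have hinj : Function.Injective (Hom.ofLE hG2le) := fun _ _ h => h
      exact ⟨p.map (cubeHom (Hom.ofLE hG2le) hinj),
        hp.map _ (Function.bijective_id)⟩

/-- Every connected finite graph on at least 3 vertices has a Hamiltonian cycle
in its cube. -/
theorem cube_hamiltonian_cycle {V : Type*} [Fintype V] [DecidableEq V]
    (G : SimpleGraph V) (hG : G.Connected) (hV : 3 ≤ Fintype.card V) :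
    ∃ (u : V) (c : G.cube.Walk u u), c.IsHamiltonianCycle := by
  classical
  -- find an adjacent pair
  obtain ⟨a⟩ := hG.nonempty
  obtain ⟨v, hva⟩ := Fintype.exists_ne_of_one_lt_card (by omega) a
  obtain ⟨w⟩ := hG.preconnected a v
  obtain ⟨b, hab⟩ : ∃ b, G.Adj a b := by
    cases w with
    | nil => exact absurd rfl hva.symm
    | cons h _ => exact ⟨_, h⟩
  obtain ⟨p, hp⟩ := connLemma G.edgeSet.ncard V G le_rfl hG a b hab
  have hcube : G.cube.Adj a b := by
    rw [cube_adj]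
    refine ⟨hab.ne, hab.reachable, ?_⟩
    calc G.dist a b ≤ (Walk.cons hab Walk.nil).length := G.dist_le _
    _ ≤ 3 := by simp
  have hlen : p.length = Fintype.card V - 1 := hp.length_eq
  -- s(a,b) is not among the edges of p
  have hnotmem : s(a, b) ∉ p.edges := by
    intro hmem
    cases p with
    | nil => exact hab.ne rfl
    | cons h' q' =>
      rename_i c _
      rw [Walk.edges_cons, List.mem_cons] at hmem
      have hpath := hp.isPath
      rw [Walk.cons_isPath_iff] at hpath
      rcases hmem with hmem | hmem
      · rw [Sym2.eq_iff] at hmem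
        rcases hmem with ⟨-, rfl⟩ | ⟨rfl, hba⟩
        · -- q' : Walk b b is a path, so it is nil, so p has length 1
          have : q' = Walk.nil := (Walk.isPath_iff_eq_nil (p := q')).mp hpath.1
          subst this
          simp only [Walk.length_cons, Walk.length_nil] at hlen
          omega
        · exact hab.ne hba.symm
      · exact hpath.2 (q'.fst_mem_support_of_mem_edges hmem)
  refine ⟨a, Walk.cons hcube p.reverse, ?_⟩
  rw [Walk.isHamiltonianCycle_isCycle_and_isHamiltonian_tail]
  constructor
  · rw [Walk.cons_isCycle_iff]
    refine ⟨hp.isPath.reverse, ?_⟩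
    rw [Walk.edges_reverse, List.mem_reverse]
    exact hnotmem
  · intro v
    rw [Walk.support_tail_of_not_nil _ (by simp), Walk.support_cons, List.tail_cons, Walk.support_reverse, List.count_reverse]
    exact hp v
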